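/- The representation R_{rs} of U_q(iso_2) is irreducible provided s ≠ ±i q^{m+1/2} for all integers m: every nonzero invariant subspace of the span of the basis vectors {|m⟩ : m ∈ Z} equals the whole span. -/

import Mathlib

noncomputable section

/-- The basis vector |m⟩, m ∈ ℤ. -/
def e (m : ℤ) : ℤ →₀ ℂ := Finsupp.single m 1

/-- A linear operator on the space with basis {|m⟩ : m ∈ ℤ}, given by its values on
the basis vectors. -/
def op (f : ℤ → (ℤ →₀ ℂ)) : (ℤ →₀ ℂ) →ₗ[ℂ] (ℤ →₀ ℂ) :=
  Finsupp.lift _ _ _ f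

variable (q sq r s : ℂ)

/-- R(I)|m⟩ = i((sqᵐ - s⁻¹q⁻ᵐ)/(q-q⁻¹))|m⟩. -/
def RI : (ℤ →₀ ℂ) →ₗ[ℂ] (ℤ →₀ ℂ) :=
  op fun m => (Complex.I * (s * q ^ m - s⁻¹ * q ^ (-m)) / (q - q⁻¹)) • e m

/-- R(T2)|m⟩ = (r/(sqᵐ + s⁻¹q⁻ᵐ))(|m+1⟩ + |m-1⟩). -/
def RT2 : (ℤ →₀ ℂ) →ₗ[ℂ] (ℤ →₀ ℂ) :=
  op fun m => (r / (s * q ^ m + s⁻¹ * q ^ (-m))) • (e (m + 1) + e (m - 1))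

/-- R(T1)|m⟩ = (i q^{1/2} r/(sqᵐ + s⁻¹q⁻ᵐ))(sqᵐ|m+1⟩ - s⁻¹q⁻ᵐ|m-1⟩),
where sq = q^{1/2}. -/
def RT1 : (ℤ →₀ ℂ) →ₗ[ℂ] (ℤ →₀ ℂ) :=
  op fun m => (Complex.I * sq * r / (s * q ^ m + s⁻¹ * q ^ (-m))) •
    ((s * q ^ m) • e (m + 1) - (s⁻¹ * q ^ (-m)) • e (m - 1))

end

namespace Stmt7Aux

lemma op_single (f : ℤ → (ℤ →₀ ℂ)) (m : ℤ) : op f (e m) = f m := by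
  rw [op, e, Finsupp.lift_apply, Finsupp.sum_single_index] <;> simp

lemma single_eq_smul_e (m : ℤ) (c : ℂ) : (Finsupp.single m c : ℤ →₀ ℂ) = c • e m := by
  rw [e, Finsupp.smul_single', mul_one]

/-- RI is diagonal. -/
lemma RI_apply (q s : ℂ) (x : ℤ →₀ ℂ) (n : ℤ) :
    (RI q s x) n = (Complex.I * (s * q ^ n - s⁻¹ * q ^ (-n)) / (q - q⁻¹)) * x n := by
  induction x using Finsupp.induction_linear with
  | zero => simp
  | add f g hf hg => simp only [map_add, Finsupp.add_apply, hf, hg]; ring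
  | single m c =>
    rw [single_eq_smul_e, map_smul, RI, op_single]
    simp only [Finsupp.smul_apply, e, Finsupp.single_apply, smul_eq_mul]
    by_cases h : m = n <;> simp [h] <;> ring

end Stmt7Aux

/-- The representation R_{rs} is irreducible provided s ≠ ±i q^{m+1/2}
for all integers m: every nonzero invariant subspace of the span of the basis
vectors {|m⟩ : m ∈ ℤ} (which is the whole space ℤ →₀ ℂ) equals the whole span. -/
theorem stmt7 (q sq r s : ℂ) (hq : q ≠ 0) (hsq : sq ^ 2 = q)
    (hroot : ∀ n : ℕ, n ≠ 0 → q ^ n ≠ 1)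
    (hr : r ≠ 0) (hs : s ≠ 0)
    (hsi : ∀ n : ℤ, s ≠ Complex.I * q ^ n ∧ s ≠ -(Complex.I * q ^ n))
    (hsi2 : ∀ n : ℤ, s ≠ Complex.I * q ^ n * sq ∧ s ≠ -(Complex.I * q ^ n * sq)) :
    ∀ W : Submodule ℂ (ℤ →₀ ℂ),
      (∀ x ∈ W, RI q s x ∈ W ∧ RT1 q sq r s x ∈ W ∧ RT2 q r s x ∈ W) →
      W ≠ ⊥ → W = ⊤ := by
  open Stmt7Aux in
  intro W hW hWne
  -- powers of q are never 1 (for nonzero integer exponents)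
  have hzroot : ∀ k : ℤ, k ≠ 0 → q ^ k ≠ 1 := by
    intro k hk h1
    rcases lt_trichotomy k 0 with hlt | h0 | hgt
    · have : q ^ (-k) = 1 := by
        rw [zpow_neg, h1, inv_one]
      have hkn : (-k).toNat ≠ 0 := by omega
      have := hroot (-k).toNat hkn
      rw [← zpow_natCast, Int.toNat_of_nonneg (by omega)] at this
      exact this ‹q ^ (-k) = 1›
    · exact hk h0
    · have hkn : k.toNat ≠ 0 := by omega
      have := hroot k.toNat hkn
      rw [← zpow_natCast, Int.toNat_of_nonneg (by omega)] at this
      exact this h1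
  have hqd : q - q⁻¹ ≠ 0 := by
    intro h
    have h2 : q ^ 2 = 1 := by
      field_simp at h
      linear_combination h
    exact hroot 2 (by norm_num) h2
  have hsqne : sq ≠ 0 := by
    intro h; apply hq; rw [← hsq, h]; ring
  -- key non-degeneracy: s^2 * q^t ≠ -1 for all integers t
  have hkey : ∀ t : ℤ, s ^ 2 * q ^ t ≠ -1 := by
    intro t ht
    rcases Int.even_or_odd t with ⟨k, hk⟩ | ⟨k, hk⟩
    · -- even case
      have h2 : q ^ k * q ^ k = q ^ t := by rw [← zpow_add₀ hq, hk]
      have hu : (s * q ^ k) ^ 2 = -1 := by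
        calc (s * q ^ k) ^ 2 = s ^ 2 * (q ^ k * q ^ k) := by ring
        _ = s ^ 2 * q ^ t := by rw [h2]
        _ = -1 := ht
      have hfac : (s * q ^ k - Complex.I) * (s * q ^ k + Complex.I) = 0 := by
        linear_combination hu - Complex.I_sq
      have e0 : q ^ (-k) * q ^ k = 1 := by
        rw [← zpow_add₀ hq]; norm_num
      rcases mul_eq_zero.mp hfac with h | h
      · exact (hsi (-k)).1 (by linear_combination q ^ (-k) * h - s * e0)
      · exact (hsi (-k)).2 (by linear_combination q ^ (-k) * h - s * e0)
    · -- odd case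
      have hk' : k + k + 1 = t := by omega
      have h2 : q ^ k * q ^ k * q = q ^ t := by
        rw [← hk', zpow_add₀ hq, zpow_add₀ hq, zpow_one]
      have hu : (s * q ^ k * sq) ^ 2 = -1 := by
        calc (s * q ^ k * sq) ^ 2 = s ^ 2 * (q ^ k * q ^ k) * sq ^ 2 := by ring
        _ = s ^ 2 * (q ^ k * q ^ k) * q := by rw [hsq]
        _ = s ^ 2 * q ^ t := by rw [← h2]; ring
        _ = -1 := ht
      have hfac : (s * q ^ k * sq - Complex.I) * (s * q ^ k * sq + Complex.I) = 0 := by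
        linear_combination hu - Complex.I_sq
      have e1 : q ^ (-k - 1) * (q ^ k * q) = 1 := by
        rw [show (-k - 1) = -(k + 1) by ring, zpow_neg, zpow_add₀ hq, zpow_one]
        rw [inv_mul_cancel₀ (by exact mul_ne_zero (zpow_ne_zero _ hq) hq)]
      rcases mul_eq_zero.mp hfac with h | h
      · exact (hsi2 (-k - 1)).1
          (by linear_combination (q ^ (-k - 1) * sq) * h - (s * q ^ (-k - 1) * q ^ k) * hsq - s * e1)
      · exact (hsi2 (-k - 1)).2
          (by linear_combination (q ^ (-k - 1) * sq) * h - (s * q ^ (-k - 1) * q ^ k) * hsq - s * e1)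
  -- the denominators never vanish
  have hD : ∀ m : ℤ, s * q ^ m + s⁻¹ * q ^ (-m) ≠ 0 := by
    intro m h
    apply hkey (m + m)
    have e0 : q ^ (-m) * q ^ m = 1 := by rw [← zpow_add₀ hq]; norm_num
    have e2 : q ^ m * q ^ m = q ^ (m + m) := (zpow_add₀ hq m m).symm
    have hsinv : s * s⁻¹ = 1 := mul_inv_cancel₀ hs
    linear_combination (s * q ^ m) * h - s ^ 2 * e2 - (q ^ m * q ^ (-m)) * hsinv - e0
  -- the eigenvalues of RI
  set lam : ℤ → ℂ := fun n => Complex.I * (s * q ^ n - s⁻¹ * q ^ (-n)) / (q - q⁻¹) with hlam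
  have hlaminj : Function.Injective lam := by
    intro m n h
    by_contra hmn
    have h1 : s * q ^ m - s⁻¹ * q ^ (-m) = s * q ^ n - s⁻¹ * q ^ (-n) := by
      have h' : Complex.I * (s * q ^ m - s⁻¹ * q ^ (-m)) =
          Complex.I * (s * q ^ n - s⁻¹ * q ^ (-n)) := by
        rw [div_eq_div_iff hqd hqd] at h
        exact mul_right_cancel₀ hqd h
      exact mul_left_cancel₀ Complex.I_ne_zero h'
    have hne : q ^ m - q ^ n ≠ 0 := by
      intro h0
      apply hzroot (m - n) (sub_ne_zero.mpr hmn)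
      rw [zpow_sub₀ hq, sub_eq_zero.mp h0, div_self (zpow_ne_zero n hq)]
    apply hkey (m + n)
    have eB : q ^ (-m) * q ^ m = 1 := by rw [← zpow_add₀ hq]; norm_num
    have eC : q ^ (-n) * q ^ n = 1 := by rw [← zpow_add₀ hq]; norm_num
    have eE : q ^ m * q ^ n = q ^ (m + n) := (zpow_add₀ hq m n).symm
    have hsinv : s * s⁻¹ = 1 := mul_inv_cancel₀ hs
    have hcan : (s ^ 2 * q ^ (m + n)) * (q ^ m - q ^ n) = (-1) * (q ^ m - q ^ n) := by
      linear_combination (s * q ^ m * q ^ n) * h1 + (s ^ 2 * (q ^ n - q ^ m)) * eE +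
        (q ^ n * q ^ (-m) * q ^ m - q ^ m * q ^ (-n) * q ^ n) * hsinv +
        (s * s⁻¹ * q ^ n) * eB - (s * s⁻¹ * q ^ m) * eC +
        (q ^ m * q ^ n * q ^ (-n) - q ^ m * q ^ n * q ^ (-m) - q ^ m + q ^ n) * hsinv
    exact mul_right_cancel₀ hne hcan
  -- W contains some basis vector
  have hext : ∃ m : ℤ, e m ∈ W := by
    obtain ⟨x0, hx0W, hx00⟩ := (Submodule.ne_bot_iff W).mp hWne
    have main : ∀ N : ℕ, ∀ x : ℤ →₀ ℂ, x ∈ W → x ≠ 0 → x.support.card ≤ N →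
        ∃ m, e m ∈ W := by
      intro N
      induction N with
      | zero =>
        intro x hxW hx0 hcard
        exact absurd (Finsupp.support_eq_empty.mp
          (Finset.card_eq_zero.mp (Nat.le_zero.mp hcard))) hx0
      | succ N ih =>
        intro x hxW hx0 hcard
        obtain ⟨m, hm⟩ := Finsupp.support_nonempty_iff.mpr hx0
        by_cases hsub : x.support ⊆ {m}
        · have hxm : x m ≠ 0 := Finsupp.mem_support_iff.mp hm
          refine ⟨m, ?_⟩
          have hxe : x = Finsupp.single m (x m) :=
            Finsupp.support_subset_singleton.mp hsub
          have hex : e m = (x m)⁻¹ • Finsupp.single m (x m) := by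
            rw [Finsupp.smul_single, smul_eq_mul, inv_mul_cancel₀ hxm, e]
          rw [hex, ← hxe]
          exact W.smul_mem _ hxW
        · obtain ⟨m', hm's, hm'⟩ : ∃ m' ∈ x.support, m' ≠ m := by
            by_contra hc
            push_neg at hc
            exact hsub fun a ha => Finset.mem_singleton.mpr (hc a ha)
          set y := RI q s x - lam m • x with hy
          have hyW : y ∈ W := W.sub_mem (hW x hxW).1 (W.smul_mem _ hxW)
          have hyco : ∀ n, y n = (lam n - lam m) * x n := by
            intro n
            rw [hy]
            rw [Finsupp.sub_apply, Finsupp.smul_apply, Stmt7Aux.RI_apply q s x n,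
              smul_eq_mul]
            simp only [hlam]
            ring
          have hysupp : y.support ⊆ x.support.erase m := by
            intro n hn
            rw [Finsupp.mem_support_iff, hyco] at hn
            rcases mul_ne_zero_iff.mp hn with ⟨h1, h2⟩
            refine Finset.mem_erase.mpr ⟨?_, Finsupp.mem_support_iff.mpr h2⟩
            intro hnm
            apply h1
            rw [hnm, sub_self]
          have hy0 : y ≠ 0 := by
            intro h0
            have hco := hyco m'
            rw [h0] at hco
            simp only [Finsupp.coe_zero, Pi.zero_apply] at hco
            rcases mul_eq_zero.mp hco.symm with h1 | h2
            · exact hm' (hlaminj (sub_eq_zero.mp h1))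
            · exact (Finsupp.mem_support_iff.mp hm's) h2
          refine ih y hyW hy0 ?_
          calc y.support.card ≤ (x.support.erase m).card := Finset.card_le_card hysupp
          _ = x.support.card - 1 := Finset.card_erase_of_mem hm
          _ ≤ N := by omega
    exact main _ x0 hx0W hx00 le_rfl
  -- from one basis vector we get its neighbours
  have hstep : ∀ m : ℤ, e m ∈ W → e (m + 1) ∈ W ∧ e (m - 1) ∈ W := by
    intro m hm
    have hu : RT2 q r s (e m) =
        (r / (s * q ^ m + s⁻¹ * q ^ (-m))) • (e (m + 1) + e (m - 1)) := by
      rw [RT2, Stmt7Aux.op_single]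
    have hv : RT1 q sq r s (e m) = (Complex.I * sq * r / (s * q ^ m + s⁻¹ * q ^ (-m))) •
        ((s * q ^ m) • e (m + 1) - (s⁻¹ * q ^ (-m)) • e (m - 1)) := by
      rw [RT1, Stmt7Aux.op_single]
    have hDne : s * q ^ m + s⁻¹ * q ^ (-m) ≠ 0 := hD m
    have hqm : q ^ m ≠ 0 := zpow_ne_zero _ hq
    have hqmn : q ^ (-m) ≠ 0 := zpow_ne_zero _ hq
    have hsinv : s⁻¹ ≠ 0 := inv_ne_zero hs
    have e0 : q ^ (-m) * q ^ m = 1 := by rw [← zpow_add₀ hq]; norm_num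
    have hsinv2 : s * s⁻¹ = 1 := mul_inv_cancel₀ hs
    have hD2 : s * q ^ m * (s * q ^ m) + 1 ≠ 0 := by
      intro h
      apply hDne
      have hprod : (s * q ^ m + s⁻¹ * q ^ (-m)) * (s * q ^ m) = 0 := by
        linear_combination h + (q ^ (-m) * q ^ m) * hsinv2 + e0
      rcases mul_eq_zero.mp hprod with h1 | h1
      · exact h1
      · exact absurd h1 (mul_ne_zero hs hqm)
    have hc1 : (s * q ^ m + s⁻¹ * q ^ (-m)) / r * (r / (s * q ^ m + s⁻¹ * q ^ (-m))) = 1 := by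
      rw [div_mul_div_comm, mul_comm (s * q ^ m + s⁻¹ * q ^ (-m)) r,
        div_self (mul_ne_zero hr hDne)]
    have hc2 : (s * q ^ m + s⁻¹ * q ^ (-m)) / (Complex.I * sq * r) *
        (Complex.I * sq * r / (s * q ^ m + s⁻¹ * q ^ (-m))) = 1 := by
      rw [div_mul_div_comm, mul_comm (s * q ^ m + s⁻¹ * q ^ (-m)) (Complex.I * sq * r),
        div_self (mul_ne_zero (mul_ne_zero (mul_ne_zero Complex.I_ne_zero hsqne) hr) hDne)]
    have hu' : ((s * q ^ m + s⁻¹ * q ^ (-m)) / r) • RT2 q r s (e m) =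
        e (m + 1) + e (m - 1) := by
      rw [hu, smul_smul, hc1, one_smul]
    have hv' : ((s * q ^ m + s⁻¹ * q ^ (-m)) / (Complex.I * sq * r)) • RT1 q sq r s (e m) =
        (s * q ^ m) • e (m + 1) - (s⁻¹ * q ^ (-m)) • e (m - 1) := by
      rw [hv, smul_smul, hc2, one_smul]
    constructor
    · have hcomb : e (m + 1) = (s * q ^ m + s⁻¹ * q ^ (-m))⁻¹ •
          ((s⁻¹ * q ^ (-m)) • (((s * q ^ m + s⁻¹ * q ^ (-m)) / r) • RT2 q r s (e m))
            + ((s * q ^ m + s⁻¹ * q ^ (-m)) / (Complex.I * sq * r)) • RT1 q sq r s (e m)) := by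
        rw [hu', hv']
        match_scalars
        · field_simp [hD2]
          rw [eq_div_iff (show s ^ 2 * q ^ m + q ^ (-m) ≠ 0 from fun h => hDne (by linear_combination s⁻¹ * h - s * q ^ m * hsinv2))]
          try ring
        · field_simp [hD2]
          try ring
      rw [hcomb]
      exact W.smul_mem _ (W.add_mem (W.smul_mem _ (W.smul_mem _ (hW _ hm).2.2))
        (W.smul_mem _ (hW _ hm).2.1))
    · have hcomb : e (m - 1) = (s * q ^ m + s⁻¹ * q ^ (-m))⁻¹ •
          ((s * q ^ m) • (((s * q ^ m + s⁻¹ * q ^ (-m)) / r) • RT2 q r s (e m))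
            - ((s * q ^ m + s⁻¹ * q ^ (-m)) / (Complex.I * sq * r)) • RT1 q sq r s (e m)) := by
        rw [hu', hv']
        match_scalars
        · field_simp [hD2]
          rw [eq_div_iff (show s ^ 2 * q ^ m + q ^ (-m) ≠ 0 from fun h => hDne (by linear_combination s⁻¹ * h - s * q ^ m * hsinv2))]
          try ring
        · field_simp [hD2]
          try ring
      rw [hcomb]
      exact W.smul_mem _ (W.sub_mem (W.smul_mem _ (W.smul_mem _ (hW _ hm).2.2))
        (W.smul_mem _ (hW _ hm).2.1))
  -- all basis vectors lie in W
  have hall : ∀ n : ℤ, e n ∈ W := by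
    obtain ⟨m0, hm0⟩ := hext
    have hup : ∀ k : ℕ, e (m0 + k) ∈ W ∧ e (m0 - k) ∈ W := by
      intro k
      induction k with
      | zero => exact ⟨by simpa using hm0, by simpa using hm0⟩
      | succ k ih =>
        constructor
        · have h1 := (hstep _ ih.1).1
          rwa [show (m0 + (k : ℤ)) + 1 = m0 + ((k + 1 : ℕ) : ℤ) by push_cast; ring] at h1
        · have h1 := (hstep _ ih.2).2
          rwa [show (m0 - (k : ℤ)) - 1 = m0 - ((k + 1 : ℕ) : ℤ) by push_cast; ring] at h1
    intro n
    rcases le_total m0 n with h | h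
    · have h1 := (hup (n - m0).toNat).1
      rwa [show m0 + ((n - m0).toNat : ℤ) = n by omega] at h1
    · have h1 := (hup (m0 - n).toNat).2
      rwa [show m0 - ((m0 - n).toNat : ℤ) = n by omega] at h1
  -- conclude
  rw [Submodule.eq_top_iff']
  intro x
  have hxsum : x = x.sum fun n a => a • e n := by
    conv_lhs => rw [← Finsupp.sum_single x]
    exact Finsupp.sum_congr fun n _ => Stmt7Aux.single_eq_smul_e n (x n)
  rw [hxsum]
  exact Submodule.finsuppSum_mem ℂ W x (fun n a => a • e n) fun n _ => W.smul_mem _ (hall n)
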